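/- Suppose B̄ < (√c_1 · Σ_{t=1}^K π_t·√c_t)/2. Define A by A_t = B̄/(√c_t · Σ_{s=1}^K π_s·√c_s) and let q = (1, 1, …, 1). Then A is a monotone non-increasing budget-feasible allocation rule with A_t ≤ 1/2 for all t and Σ_{t=1}^K π_t·c_t·A_t = B̄, and (A, q) is an equilibrium pair. -/

import Mathlib

/-- Case 3, small budget `B̄ < √c_1 · E[√c] / 2`: the allocation rule
`A_t = B̄/(√c_t · Σ_s π_s √c_s)` together with `q = (1,…,1)` is a monotone
non-increasing budget-feasible allocation rule with `A_t ≤ 1/2` spending exactly `B̄`,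
and `(A, q)` is an equilibrium pair. Costs are indexed by `{1, …, K}`. -/
theorem equilibrium_small_budget
    (K : ℕ) (hK : 1 ≤ K) (c π A q : ℕ → ℝ) (Bbar : ℝ)
    (hc : ∀ t ∈ Finset.Icc 1 K, 0 < c t)
    (hcmono : ∀ j ∈ Finset.Icc 1 (K - 1), c j < c (j + 1))
    (hπpos : ∀ t ∈ Finset.Icc 1 K, 0 < π t)
    (hπsum : ∑ t ∈ Finset.Icc 1 K, π t = 1)
    (hBbar_pos : 0 < Bbar)
    (hBbar_small : Bbar
      < Real.sqrt (c 1) * (∑ t ∈ Finset.Icc 1 K, π t * Real.sqrt (c t)) / 2)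
    (hA : ∀ t ∈ Finset.Icc 1 K,
      A t = Bbar / (Real.sqrt (c t) * ∑ s ∈ Finset.Icc 1 K, π s * Real.sqrt (c s)))
    (hq : ∀ t ∈ Finset.Icc 1 K, q t = 1) :
    (∀ t ∈ Finset.Icc 1 K, 0 < A t ∧ A t ≤ 1) ∧
    (∀ s ∈ Finset.Icc 1 K, ∀ t ∈ Finset.Icc 1 K, s ≤ t → A t ≤ A s) ∧
    (∀ t ∈ Finset.Icc 1 K, A t ≤ 1 / 2) ∧
    (∑ t ∈ Finset.Icc 1 K, π t * c t * A t = Bbar) ∧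
    (∀ A' : ℕ → ℝ, (∀ t ∈ Finset.Icc 1 K, 0 < A' t ∧ A' t ≤ 1) →
      (∑ t ∈ Finset.Icc 1 K, π t * c t * A' t ≤ Bbar) →
      (∑ t ∈ Finset.Icc 1 K, π t * q t / A t) - (∑ t ∈ Finset.Icc 1 K, π t * q t) ^ 2
        ≤ (∑ t ∈ Finset.Icc 1 K, π t * q t / A' t)
          - (∑ t ∈ Finset.Icc 1 K, π t * q t) ^ 2) ∧
    (∀ q' : ℕ → ℝ, (∀ t ∈ Finset.Icc 1 K, q' t ∈ Set.Icc (0 : ℝ) 1) →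
      (∑ t ∈ Finset.Icc 1 K, π t * q' t / A t) - (∑ t ∈ Finset.Icc 1 K, π t * q' t) ^ 2
        ≤ (∑ t ∈ Finset.Icc 1 K, π t * q t / A t)
          - (∑ t ∈ Finset.Icc 1 K, π t * q t) ^ 2) := by
  set I := Finset.Icc 1 K with hI
  set S := ∑ t ∈ I, π t * Real.sqrt (c t) with hSdef
  have h1I : (1 : ℕ) ∈ I := Finset.mem_Icc.mpr ⟨le_refl 1, hK⟩
  have hSpos : 0 < S :=
    Finset.sum_pos (fun t ht => mul_pos (hπpos t ht) (Real.sqrt_pos.mpr (hc t ht)))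
      ⟨1, h1I⟩
  -- monotonicity of c
  -- monotonicity of c
  have hcle : ∀ s ∈ I, ∀ t ∈ I, s ≤ t → c s ≤ c t := by
    intro s hs t ht hst
    simp only [hI, Finset.mem_Icc] at hs ht
    have key : ∀ u, s ≤ u → u ≤ K → c s ≤ c u := by
      intro u
      induction u with
      | zero => intro h _; exact absurd h (by omega)
      | succ n ih =>
        intro hsn hnK
        rcases Nat.lt_or_ge s (n + 1) with h | h
        · have h1 : c s ≤ c n := ih (by omega) (by omega)
          have h2 : c n < c (n + 1) :=
            hcmono n (Finset.mem_Icc.mpr ⟨by omega, by omega⟩)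
          linarith
        · have hsn' : s = n + 1 := by omega
          rw [hsn']
    exact key t hst ht.2
  have hsqrtpos : ∀ t ∈ I, 0 < Real.sqrt (c t) := fun t ht => Real.sqrt_pos.mpr (hc t ht)
  have hsqle : ∀ t ∈ I, Real.sqrt (c 1) ≤ Real.sqrt (c t) := fun t ht =>
    Real.sqrt_le_sqrt (hcle 1 h1I t ht (Finset.mem_Icc.mp ht).1)
  have hApos : ∀ t ∈ I, 0 < A t := by
    intro t ht
    rw [hA t ht]
    exact div_pos hBbar_pos (mul_pos (hsqrtpos t ht) hSpos)
  have hhalf : ∀ t ∈ I, A t ≤ 1 / 2 := by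
    intro t ht
    rw [hA t ht, div_le_div_iff₀ (mul_pos (hsqrtpos t ht) hSpos) two_pos]
    have h1 := hsqle t ht
    nlinarith [hSpos, hBbar_small]
  have hmono : ∀ s ∈ I, ∀ t ∈ I, s ≤ t → A t ≤ A s := by
    intro s hs t ht hst
    rw [hA s hs, hA t ht]
    gcongr
    · exact mul_pos (hsqrtpos s hs) hSpos
    · exact hcle s hs t ht hst
  have hbudget : ∑ t ∈ I, π t * c t * A t = Bbar := by
    have hpt : ∀ t ∈ I, π t * c t * A t = π t * Real.sqrt (c t) * (Bbar / S) := by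
      intro t ht
      rw [hA t ht]
      have hs2 : Real.sqrt (c t) * Real.sqrt (c t) = c t := Real.mul_self_sqrt (hc t ht).le
      have h1 : Real.sqrt (c t) ≠ 0 := (hsqrtpos t ht).ne'
      have hs2' : Real.sqrt (c t) ^ 2 = c t := Real.sq_sqrt (hc t ht).le
      field_simp
      linear_combination (-π t) * hs2'
    rw [Finset.sum_congr rfl hpt, ← Finset.sum_mul, ← hSdef, mul_comm,
      div_mul_cancel₀ Bbar hSpos.ne']
  have hqsum : ∑ t ∈ I, π t * q t = 1 := by
    rw [Finset.sum_congr rfl (fun t ht => by rw [hq t ht, mul_one]), hπsum]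
  have hsum_inv : ∑ t ∈ I, π t * q t / A t = S ^ 2 / Bbar := by
    have hpt : ∀ t ∈ I, π t * q t / A t = π t * Real.sqrt (c t) * (S / Bbar) := by
      intro t ht
      rw [hq t ht, hA t ht, mul_one]
      field_simp
    rw [Finset.sum_congr rfl hpt, ← Finset.sum_mul, ← hSdef]
    field_simp
  refine ⟨fun t ht => ⟨hApos t ht, le_trans (hhalf t ht) (by norm_num)⟩, hmono, hhalf,
    hbudget, ?_, ?_⟩
  · -- minimization
    intro A' hA'pos hA'budget
    apply sub_le_sub_right
    rw [hsum_inv]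
    have hq1 : ∀ t ∈ I, π t * q t / A' t = π t / A' t := fun t ht => by
      rw [hq t ht, mul_one]
    rw [Finset.sum_congr rfl hq1]
    have hCS : S ^ 2 ≤ (∑ t ∈ I, π t * c t * A' t) * (∑ t ∈ I, π t / A' t) := by
      apply Finset.sum_sq_le_sum_mul_sum_of_sq_eq_mul
      · intro i hi
        exact mul_nonneg (mul_nonneg (hπpos i hi).le (hc i hi).le) (hA'pos i hi).1.le
      · intro i hi
        exact (div_pos (hπpos i hi) (hA'pos i hi).1).le
      · intro i hi
        have hs2 : Real.sqrt (c i) * Real.sqrt (c i) = c i := Real.mul_self_sqrt (hc i hi).le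
        have hne : A' i ≠ 0 := (hA'pos i hi).1.ne'
        field_simp
        linear_combination π i ^ 2 * hs2
    have hP : 0 ≤ ∑ t ∈ I, π t / A' t :=
      Finset.sum_nonneg fun t ht => (div_pos (hπpos t ht) (hA'pos t ht).1).le
    have h2 : S ^ 2 ≤ Bbar * ∑ t ∈ I, π t / A' t :=
      le_trans hCS (mul_le_mul_of_nonneg_right hA'budget hP)
    rw [div_le_iff₀ hBbar_pos]
    linarith
  · -- maximization
    intro q' hq'
    set m := ∑ t ∈ I, π t * q' t with hm
    have hm0 : 0 ≤ m :=
      Finset.sum_nonneg fun t ht => mul_nonneg (hπpos t ht).le (hq' t ht).1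
    have hm1 : m ≤ 1 := by
      rw [hm, ← hπsum]
      exact Finset.sum_le_sum fun t ht => by
        nlinarith [(hπpos t ht), (hq' t ht).2]
    have hsplit : ∀ t ∈ I, π t * q' t / A t = π t * q t / A t - π t * (1 - q' t) / A t := by
      intro t ht
      rw [hq t ht, ← sub_div]
      congr 1
      ring
    have hDsum : ∑ t ∈ I, 2 * (π t * (1 - q' t)) = 2 * (1 - m) := by
      have h1 : ∑ t ∈ I, 2 * (π t * (1 - q' t))
          = 2 * ((∑ t ∈ I, π t) - ∑ t ∈ I, π t * q' t) := by
        rw [← Finset.sum_sub_distrib, ← Finset.mul_sum]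
        congr 1
        exact Finset.sum_congr rfl fun t _ => by ring
      rw [h1, hπsum]
    have hD : 2 * (1 - m) ≤ ∑ t ∈ I, π t * (1 - q' t) / A t := by
      rw [← hDsum]
      apply Finset.sum_le_sum
      intro t ht
      have hApos' := hApos t ht
      have hnn : 0 ≤ π t * (1 - q' t) :=
        mul_nonneg (hπpos t ht).le (by linarith [(hq' t ht).2])
      rw [le_div_iff₀ hApos']
      nlinarith [hhalf t ht]
    have hsplitsum : ∑ t ∈ I, π t * q' t / A t
        = (∑ t ∈ I, π t * q t / A t) - ∑ t ∈ I, π t * (1 - q' t) / A t := by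
      rw [← Finset.sum_sub_distrib]
      exact Finset.sum_congr rfl hsplit
    rw [hsplitsum, hqsum]
    nlinarith [hD]
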